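/- arXiv:2012.11339 — 2 statements merged into one kernel-verified Lean document; each statement's English description precedes it below -/
import Mathlib

section
/- Let K₁ and K₂ be N×N real symmetric positive semidefinite matrices and set K = K₁ + K₂. For a real symmetric matrix S let λ_1(S) ≥ … ≥ λ_N(S) denote its eigenvalues in decreasing order (with multiplicity). Fix 1 ≤ M ≤ N and define C_single = N · ∑_{i=M+1}^{N} λ_i(K) and C_multi = N · ( ∑_{i=1}^{M} ( λ_i(K) − λ_i(K₁) − λ_i(K₂) ) + ∑_{j=M+1}^{N} λ_j(K) ). Then C_multi ≤ C_single. -/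
open Finset

section Aux

variable {N : ℕ}

/-- View a Euclidean space vector as a plain vector. -/
noncomputable def tv (x : EuclideanSpace ℝ (Fin N)) : Fin N → ℝ := x

lemma inner_eq_dot (x y : EuclideanSpace ℝ (Fin N)) :
    (inner ℝ x y : ℝ) = dotProduct (tv x) (tv y) := by
  simp [PiLp.inner_apply, dotProduct, tv, mul_comm]

lemma parseval (b : OrthonormalBasis (Fin N) ℝ (EuclideanSpace ℝ (Fin N))) (x y : Fin N → ℝ) :
    ∑ j, (dotProduct (tv (b j)) x) * (dotProduct (tv (b j)) y)
      = dotProduct x y := by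
  have h := b.sum_inner_mul_inner ((WithLp.equiv 2 _).symm x) ((WithLp.equiv 2 _).symm y)
  simp only [inner_eq_dot] at h
  simp only [show ∀ z : Fin N → ℝ, tv ((WithLp.equiv 2 _).symm z) = z from fun _ => rfl] at h
  simp_rw [dotProduct_comm x] at h
  rw [h, dotProduct_comm]

lemma tv_norm_one (b : OrthonormalBasis (Fin N) ℝ (EuclideanSpace ℝ (Fin N))) (j : Fin N) :
    dotProduct (tv (b j)) (tv (b j)) = 1 := by
  rw [← inner_eq_dot, real_inner_self_eq_norm_sq, b.orthonormal.1 j]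
  norm_num

lemma eig_dot {A : Matrix (Fin N) (Fin N) ℝ} (hA : A.IsHermitian) (j : Fin N) (x : Fin N → ℝ) :
    dotProduct (tv (hA.eigenvectorBasis j)) (A.mulVec x)
      = hA.eigenvalues j * dotProduct (tv (hA.eigenvectorBasis j)) x := by
  have hsym : A.transpose = A := by
    have h := hA; rwa [Matrix.IsHermitian, Matrix.conjTranspose_eq_transpose_of_trivial] at h
  rw [Matrix.dotProduct_mulVec, ← Matrix.mulVec_transpose, hsym]
  have h1 := hA.mulVec_eigenvectorBasis j
  rw [show A.mulVec (tv (hA.eigenvectorBasis j))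
        = hA.eigenvalues j • (tv (hA.eigenvectorBasis j)) from h1,
     smul_dotProduct, smul_eq_mul]

lemma card_filter_lt {M : ℕ} (h : M ≤ N) :
    (Finset.univ.filter (fun i : Fin N => (i : ℕ) < M)).card = M := by
  have : (Finset.univ.filter (fun i : Fin N => (i : ℕ) < M))
      = Finset.map (Fin.castLEEmb h) Finset.univ := by
    ext i
    simp only [Finset.mem_filter, Finset.mem_univ, true_and, Finset.mem_map, Fin.castLEEmb,
      Function.Embedding.coeFn_mk]
    constructor
    · intro hi; exact ⟨⟨(i : ℕ), hi⟩, by ext; simp⟩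
    · rintro ⟨a, rfl⟩; simpa using a.isLt
  rw [this]; simp

/-- Scalar majorization step: for nonnegative antitone `lam` and `t ∈ [0,1]ᴺ` with
`∑ t = M`, the weighted sum `∑ lam i * t i` is at most the top-`M` sum of `lam`. -/
lemma sorted_dom {M : ℕ} (hMN : M ≤ N) (lam t : Fin N → ℝ) (hmono : Antitone lam)
    (h0 : ∀ i, 0 ≤ lam i) (ht0 : ∀ i, 0 ≤ t i) (ht1 : ∀ i, t i ≤ 1)
    (hts : ∑ i, t i = M) :
    ∑ i, lam i * t i ≤ ∑ i ∈ Finset.univ.filter (fun i : Fin N => (i : ℕ) < M), lam i := by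
  classical
  set p : ℝ := if h : M < N then lam ⟨M, h⟩ else 0 with hp
  have hple : ∀ i : Fin N, (i : ℕ) < M → p ≤ lam i := by
    intro i hi
    by_cases h : M < N
    · simp only [hp, dif_pos h]
      exact hmono (by simpa [Fin.le_def] using hi.le)
    · simp only [hp, dif_neg h]; exact h0 i
  have hgep : ∀ i : Fin N, M ≤ (i : ℕ) → lam i ≤ p := by
    intro i hi
    have h : M < N := lt_of_le_of_lt hi i.isLt
    simp only [hp, dif_pos h]
    exact hmono (by simpa [Fin.le_def] using hi)
  set F := Finset.univ.filter (fun i : Fin N => (i : ℕ) < M) with hF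
  set G := Finset.univ.filter (fun i : Fin N => ¬ (i : ℕ) < M) with hG
  have hsplit : ∀ f : Fin N → ℝ, ∑ i, f i = ∑ i ∈ F, f i + ∑ i ∈ G, f i := fun f =>
    (Finset.sum_filter_add_sum_filter_not Finset.univ _ f).symm
  have hcard : (F.card : ℝ) = M := by rw [hF, card_filter_lt hMN]
  have key : (∑ i ∈ F, (t i - 1)) + ∑ i ∈ G, t i = 0 := by
    have h1 : ∑ i ∈ F, (t i - 1) = ∑ i ∈ F, t i - M := by
      rw [Finset.sum_sub_distrib, Finset.sum_const, nsmul_eq_mul, mul_one, hcard]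
    have h2 := hsplit t
    rw [h1]; linarith [hts]
  have e1 : ∑ i ∈ F, lam i * t i ≤ ∑ i ∈ F, (lam i + p * (t i - 1)) := by
    apply Finset.sum_le_sum
    intro i hi
    have hi' : (i : ℕ) < M := (Finset.mem_filter.mp hi).2
    nlinarith [hple i hi', ht1 i, ht0 i]
  have e2 : ∑ i ∈ G, lam i * t i ≤ ∑ i ∈ G, p * t i := by
    apply Finset.sum_le_sum
    intro i hi
    have hi' : M ≤ (i : ℕ) := le_of_not_gt (Finset.mem_filter.mp hi).2
    nlinarith [hgep i hi', ht0 i]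
  have e3 : ∑ i ∈ F, (lam i + p * (t i - 1)) = ∑ i ∈ F, lam i + p * ∑ i ∈ F, (t i - 1) := by
    rw [Finset.sum_add_distrib, Finset.mul_sum]
  have e4 : ∑ i ∈ G, p * t i = p * ∑ i ∈ G, t i := by rw [Finset.mul_sum]
  have := hsplit (fun i => lam i * t i)
  have hmul : p * ((∑ i ∈ F, (t i - 1)) + ∑ i ∈ G, t i) = 0 := by rw [key, mul_zero]
  nlinarith [e1, e2, e3, e4, hmul]

/-- Ky Fan type bound: the sum of quadratic forms of a PSD matrix `A` over any `M`
orthonormal vectors is at most the sum of the top `M` eigenvalues of `A`. -/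
lemma trace_bound {A : Matrix (Fin N) (Fin N) ℝ} (hA : A.PosSemidef)
    (lam : Fin N → ℝ) (hmono : Antitone lam) (σ : Equiv.Perm (Fin N))
    (hσ : ∀ i, lam i = hA.1.eigenvalues (σ i))
    {M : ℕ} (hMN : M ≤ N)
    (b : OrthonormalBasis (Fin N) ℝ (EuclideanSpace ℝ (Fin N)))
    (S : Finset (Fin N)) (hS : S.card = M) :
    ∑ i ∈ S, dotProduct (tv (b i)) (A.mulVec (tv (b i)))
      ≤ ∑ i ∈ Finset.univ.filter (fun i : Fin N => (i : ℕ) < M), lam i := by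
  classical
  set u := fun j => tv (hA.1.eigenvectorBasis j) with hu
  set t : Fin N → ℝ := fun j => ∑ i ∈ S, (dotProduct (u j) (tv (b i)))^2 with ht
  have hdec : ∀ x : Fin N → ℝ,
      dotProduct x (A.mulVec x) = ∑ j, hA.1.eigenvalues j * (dotProduct (u j) x)^2 := by
    intro x
    have h := parseval hA.1.eigenvectorBasis x (A.mulVec x)
    rw [← h]
    apply Finset.sum_congr rfl
    intro j _
    rw [show dotProduct (tv (hA.1.eigenvectorBasis j)) x = dotProduct (u j) x from rfl,
        eig_dot hA.1 j x]
    ring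
  have hLHS : ∑ i ∈ S, dotProduct (tv (b i)) (A.mulVec (tv (b i)))
      = ∑ j, hA.1.eigenvalues j * t j := by
    simp_rw [hdec, ht]
    rw [Finset.sum_comm]
    apply Finset.sum_congr rfl
    intro j _
    rw [Finset.mul_sum]
  have hre : ∑ j, hA.1.eigenvalues j * t j = ∑ j, lam j * t (σ j) := by
    rw [← Equiv.sum_comp σ (fun j => hA.1.eigenvalues j * t j)]
    apply Finset.sum_congr rfl
    intro j _
    rw [hσ j]
  rw [hLHS, hre]
  apply sorted_dom hMN lam (fun j => t (σ j)) hmono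
  · intro i; rw [hσ i]; exact hA.eigenvalues_nonneg (σ i)
  · intro i
    exact Finset.sum_nonneg fun j _ => sq_nonneg _
  · intro i
    have hb : ∀ x : Fin N → ℝ, ∑ k, (dotProduct (tv (b k)) x)^2 = dotProduct x x := by
      intro x
      have := parseval b x x
      simpa [sq] using this
    calc t (σ i) = ∑ k ∈ S, (dotProduct (u (σ i)) (tv (b k)))^2 := rfl
      _ ≤ ∑ k, (dotProduct (u (σ i)) (tv (b k)))^2 :=
          Finset.sum_le_sum_of_subset_of_nonneg (Finset.subset_univ S)
            (fun j _ _ => sq_nonneg _)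
      _ = ∑ k, (dotProduct (tv (b k)) (u (σ i)))^2 := by
          simp_rw [dotProduct_comm]
      _ = dotProduct (u (σ i)) (u (σ i)) := hb _
      _ = 1 := tv_norm_one _ _
  · rw [Equiv.sum_comp σ t]
    have : ∑ j, t j = ∑ i ∈ S, ∑ j, (dotProduct (u j) (tv (b i)))^2 := by
      rw [ht]; exact Finset.sum_comm
    rw [this]
    have heach : ∀ i, ∑ j, (dotProduct (u j) (tv (b i)))^2 = 1 := by
      intro i
      have := parseval hA.1.eigenvectorBasis (tv (b i)) (tv (b i))
      rw [tv_norm_one b i] at this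
      simpa [sq] using this
    simp_rw [heach]
    rw [Finset.sum_const, hS, nsmul_eq_mul, mul_one]

end Aux

/-- **Proposition 1 (second part).** For real symmetric positive semidefinite `N × N`
matrices `K₁`, `K₂` with `K = K₁ + K₂`, eigenvalues listed in decreasing order with
multiplicity (`μ₁`, `μ₂`, `μ` for `K₁`, `K₂`, `K`), and `1 ≤ M ≤ N`, the MultiSVGP bound
constant `C_multi = N(∑_{i≤M}(λ_i(K) − λ_i(K₁) − λ_i(K₂)) + ∑_{j>M} λ_j(K))` is at most
the SVGP bound constant `C_single = N ∑_{j>M} λ_j(K)`. -/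
theorem c_multi_le_c_single
    (N : ℕ) (K₁ K₂ : Matrix (Fin N) (Fin N) ℝ)
    (hK₁ : K₁.PosSemidef) (hK₂ : K₂.PosSemidef) (hK : (K₁ + K₂).IsHermitian)
    (μ₁ μ₂ μ : Fin N → ℝ)
    (hμ₁ : Antitone μ₁) (hμ₂ : Antitone μ₂) (hμ : Antitone μ)
    (hμ₁e : ∃ σ : Equiv.Perm (Fin N), ∀ i, μ₁ i = hK₁.1.eigenvalues (σ i))
    (hμ₂e : ∃ σ : Equiv.Perm (Fin N), ∀ i, μ₂ i = hK₂.1.eigenvalues (σ i))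
    (hμe : ∃ σ : Equiv.Perm (Fin N), ∀ i, μ i = hK.eigenvalues (σ i))
    (M : ℕ) (hM1 : 1 ≤ M) (hMN : M ≤ N) :
    (N : ℝ) * (∑ i ∈ Finset.univ.filter (fun i : Fin N => (i : ℕ) < M),
        (μ i - μ₁ i - μ₂ i) +
      ∑ j ∈ Finset.univ.filter (fun j : Fin N => M ≤ (j : ℕ)), μ j) ≤
    (N : ℝ) * ∑ j ∈ Finset.univ.filter (fun j : Fin N => M ≤ (j : ℕ)), μ j := by
  classical
  obtain ⟨σ₁, hσ₁⟩ := hμ₁e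
  obtain ⟨σ₂, hσ₂⟩ := hμ₂e
  obtain ⟨σ, hσ⟩ := hμe
  set F := Finset.univ.filter (fun i : Fin N => (i : ℕ) < M) with hF
  -- Key inequality: top-M sum of μ is at most top-M sums of μ₁ and μ₂ combined (Ky Fan).
  have hkey : ∑ i ∈ F, μ i ≤ ∑ i ∈ F, μ₁ i + ∑ i ∈ F, μ₂ i := by
    set b := hK.eigenvectorBasis with hb
    set S := F.image σ with hSdef
    have hScard : S.card = M := by
      rw [hSdef, Finset.card_image_of_injective _ σ.injective, hF, card_filter_lt hMN]
    have h1 : ∑ i ∈ F, μ i = ∑ j ∈ S, hK.eigenvalues j := by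
      rw [hSdef, Finset.sum_image (fun a _ c _ h => σ.injective h)]
      exact Finset.sum_congr rfl fun i _ => hσ i
    have h2 : ∀ j : Fin N, hK.eigenvalues j
        = dotProduct (tv (b j)) ((K₁ + K₂).mulVec (tv (b j))) := by
      intro j
      rw [eig_dot hK j (tv (b j)), tv_norm_one b j, mul_one]
    have h3 : ∑ j ∈ S, hK.eigenvalues j
        = ∑ j ∈ S, dotProduct (tv (b j)) (K₁.mulVec (tv (b j)))
          + ∑ j ∈ S, dotProduct (tv (b j)) (K₂.mulVec (tv (b j))) := by
      rw [← Finset.sum_add_distrib]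
      apply Finset.sum_congr rfl
      intro j _
      rw [h2 j, Matrix.add_mulVec, dotProduct_add]
    have h4 := trace_bound hK₁ μ₁ hμ₁ σ₁ hσ₁ hMN b S hScard
    have h5 := trace_bound hK₂ μ₂ hμ₂ σ₂ hσ₂ hMN b S hScard
    rw [h1, h3]
    exact add_le_add h4 h5
  have hX : ∑ i ∈ F, (μ i - μ₁ i - μ₂ i) ≤ 0 := by
    rw [Finset.sum_sub_distrib, Finset.sum_sub_distrib]
    linarith
  have hN : (0 : ℝ) ≤ (N : ℝ) := Nat.cast_nonneg N
  nlinarith [mul_nonpos_of_nonneg_of_nonpos hN hX,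
    mul_le_mul_of_nonneg_left hX hN]
end

section
/- Let b > 0 and x > 0. Then ∫₀^∞ [ (1/φ)^{1/2} / Γ(1/2) · x^{−3/2} · exp(−1/(φ·x)) ] · [ (1/b²)^{1/2} / Γ(1/2) · φ^{−3/2} · exp(−1/(b²·φ)) ] dφ = b / ( π · √x · (x + b²) ). -/
open Real MeasureTheory Set in
lemma aux_inv_sub_integral {c : ℝ} (hc : 0 < c) :
    ∫ φ in Set.Ioi (0 : ℝ), φ ^ ((-2 : ℝ)) * Real.exp (-(c * φ⁻¹)) = 1 / c := by
  have h := MeasureTheory.integral_comp_rpow_Ioi (fun y => Real.exp (-(c * y)))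
      (p := -1) (by norm_num)
  have h2 : ∫ y in Set.Ioi (0:ℝ), Real.exp (-(c * y)) = 1 / c := by
    have := Real.integral_rpow_mul_exp_neg_mul_Ioi (a := 1) (r := c) one_pos hc
    simpa [Real.Gamma_one] using this
  rw [h2] at h
  rw [← h]
  refine MeasureTheory.setIntegral_congr_fun measurableSet_Ioi (fun φ hφ => ?_)
  have hφ' : (0:ℝ) < φ := hφ
  simp [Real.rpow_neg_one, smul_eq_mul]
  norm_num

open Real in
/-- **Inverse-Gamma compound marginal.** For `b > 0` and `x > 0`, integrating the product
of the `InverseGamma(1/2, φ⁻¹)` density in `x` and the `InverseGamma(1/2, b⁻²)` density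
in `φ` over `φ ∈ (0, ∞)` gives the density `b / (π √x (x + b²))` of the square of a
Half-Cauchy(b) random variable. -/
theorem inverse_gamma_compound_marginal (b x : ℝ) (hb : 0 < b) (hx : 0 < x) :
    ∫ φ in Set.Ioi (0 : ℝ),
      ((1 / φ) ^ ((1 : ℝ) / 2) / Real.Gamma (1 / 2) * x ^ (-(3 : ℝ) / 2) *
          Real.exp (-1 / (φ * x))) *
        ((1 / b ^ 2) ^ ((1 : ℝ) / 2) / Real.Gamma (1 / 2) * φ ^ (-(3 : ℝ) / 2) *
          Real.exp (-1 / (b ^ 2 * φ)))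
      = b / (Real.pi * Real.sqrt x * (x + b ^ 2)) := by
  set c : ℝ := 1 / x + 1 / b ^ 2 with hcdef
  have hc : 0 < c := by positivity
  have hG : Real.Gamma (1 / 2) = Real.sqrt Real.pi := Real.Gamma_one_half_eq
  have hb2 : (0:ℝ) < b ^ 2 := by positivity
  have hπ : Real.sqrt Real.pi * Real.sqrt Real.pi = Real.pi :=
    Real.mul_self_sqrt Real.pi_pos.le
  have key : (∫ φ in Set.Ioi (0 : ℝ),
      ((1 / φ) ^ ((1 : ℝ) / 2) / Real.Gamma (1 / 2) * x ^ (-(3 : ℝ) / 2) *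
          Real.exp (-1 / (φ * x))) *
        ((1 / b ^ 2) ^ ((1 : ℝ) / 2) / Real.Gamma (1 / 2) * φ ^ (-(3 : ℝ) / 2) *
          Real.exp (-1 / (b ^ 2 * φ))))
      = (x ^ (-(3 : ℝ) / 2) / (b * Real.pi)) *
        ∫ φ in Set.Ioi (0 : ℝ), φ ^ ((-2 : ℝ)) * Real.exp (-(c * φ⁻¹)) := by
    rw [← MeasureTheory.integral_const_mul]
    refine MeasureTheory.setIntegral_congr_fun measurableSet_Ioi (fun φ hφ => ?_)
    have hφ : (0:ℝ) < φ := hφ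
    have h1 : (1 / φ) ^ ((1 : ℝ) / 2) = φ ^ (-(1:ℝ)/2) := by
      rw [one_div, Real.inv_rpow hφ.le, ← Real.rpow_neg hφ.le]
      norm_num
    have h2 : (1 / b ^ 2) ^ ((1 : ℝ) / 2) = 1 / b := by
      rw [one_div, Real.inv_rpow hb2.le, ← Real.sqrt_eq_rpow, Real.sqrt_sq hb.le, one_div]
    have h3 : φ ^ (-(1:ℝ)/2) * φ ^ (-(3:ℝ)/2) = φ ^ ((-2:ℝ)) := by
      rw [← Real.rpow_add hφ]; norm_num
    have h4 : Real.exp (-1 / (φ * x)) * Real.exp (-1 / (b ^ 2 * φ))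
        = Real.exp (-(c * φ⁻¹)) := by
      rw [← Real.exp_add]
      congr 1
      field_simp [hcdef]
      have hx1 : x * (1 / x) = 1 := by field_simp
      have hb1 : b ^ 2 * (1 / b ^ 2) = 1 := by field_simp
      linear_combination (b ^ 2 * x) * hcdef + b ^ 2 * hx1 + x * hb1
    rw [h1, h2, hG, ← h3, ← h4]
    conv_rhs => rw [← hπ]
    ring
  rw [key, aux_inv_sub_integral hc]
  have hcx : c = (x + b^2) / (x * b^2) := by rw [hcdef, div_add_div _ _ hx.ne' hb2.ne']; ring
  have hxs : Real.sqrt x * Real.sqrt x = x := Real.mul_self_sqrt hx.le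
  have h32 : x ^ ((3:ℝ)/2) = x * Real.sqrt x := by
    rw [show (3:ℝ)/2 = 1 + 1/2 by norm_num, Real.rpow_add hx, Real.rpow_one,
      ← Real.sqrt_eq_rpow]
  have hx32 : x ^ (-(3 : ℝ) / 2) = (x * Real.sqrt x)⁻¹ := by
    rw [show (-(3:ℝ))/2 = -((3:ℝ)/2) by ring, Real.rpow_neg hx.le, h32]
  rw [hcx, hx32]
  have hsx : (0:ℝ) < Real.sqrt x := Real.sqrt_pos.mpr hx
  have hxb : (0:ℝ) < x + b^2 := by positivity
  field_simp
end
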